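/- There exists a unique measure Q̃ on the σ-algebra σ(𝒜̃) generated by 𝒜̃ such that for every cylindrical set A_{z,Z} and all 0 ≤ s < t ≤ T: Q̃(A_{z,Z} × (s,t]) = E_{Q_BS}[1_{{W ∈ A_{z,Z}}}·(G(s) − G(t))] and Q̃(A_{z,Z} × (T,∞)) = E_{Q_BS}[1_{{W ∈ A_{z,Z}}}·G(T)]; moreover Q̃ is a probability measure. Equivalently, the additive set function defined by these formulas on the algebra 𝒜̃ is countably additive on 𝒜̃. -/

import Mathlib

open MeasureTheory

/-- Borel σ-algebra on the one-point compactification `Ṙ` of `ℝ`. -/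
instance : MeasurableSpace (OnePoint ℝ) := borel _

/-- The path space `Ṙ^{[0,T]}`. -/
abbrev PathSp (T : ℝ) := Set.Icc (0 : ℝ) T → OnePoint ℝ

/-- The space `Ω̃ := Ṙ^{[0,T]} × (0,∞)`. -/
abbrev OmegaTilde (T : ℝ) := PathSp T × {x : ℝ // 0 < x}

/-- The cylindrical set `A_{z,Z} := {x ∈ Ṙ^{[0,T]} : (x(z₁),…,x(zₙ)) ∈ Z}`. -/
def Cyl (T : ℝ) (n : ℕ) (z : Fin n → Set.Icc (0 : ℝ) T)
    (Z : Set (Fin n → OnePoint ℝ)) : Set (PathSp T) :=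
  {x | (fun i => x (z i)) ∈ Z}

/-- `C` is a cylindrical set determined by a Borel set `Z ⊆ Ṙⁿ`. -/
def IsCylSet (T : ℝ) (C : Set (PathSp T)) : Prop :=
  ∃ (n : ℕ) (z : Fin n → Set.Icc (0 : ℝ) T) (Z : Set (Fin n → OnePoint ℝ)),
    MeasurableSet Z ∧ C = Cyl T n z Z

/-- The basic sets `A_{z,Z} × (s,t]` (with `0 ≤ s < t ≤ T`) and `A_{z,Z} × (T,∞)`. -/
def IsBasicSet (T : ℝ) (A : Set (OmegaTilde T)) : Prop :=
  ∃ C : Set (PathSp T), IsCylSet T C ∧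
    ((∃ s t : ℝ, 0 ≤ s ∧ s < t ∧ t ≤ T ∧
        A = {p : OmegaTilde T | p.1 ∈ C ∧ s < (p.2 : ℝ) ∧ (p.2 : ℝ) ≤ t}) ∨
      A = {p : OmegaTilde T | p.1 ∈ C ∧ T < (p.2 : ℝ)})

/-- The algebra `𝒜̃` of finite unions of disjoint basic sets. -/
def AlgTilde (T : ℝ) : Set (Set (OmegaTilde T)) :=
  {A | ∃ (m : ℕ) (B : Fin m → Set (OmegaTilde T)), (∀ i, IsBasicSet T (B i)) ∧
    Pairwise (Function.onFun Disjoint B) ∧ A = ⋃ i, B i}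



open MeasureTheory Filter Topology Set

section Tau

variable {T : ℝ} {g : ℝ → ℝ}

/-- The set `{r ∈ [0,T] : g r < u}`. -/
def SS (T : ℝ) (g : ℝ → ℝ) (u : ℝ) : Set ℝ := {r | r ∈ Set.Icc 0 T ∧ g r < u}

/-- Generalized inverse: `tau T g u = T+1` if `u ≤ g T`, else `sInf {r ∈ [0,T] : g r < u}`. -/
noncomputable def tau (T : ℝ) (g : ℝ → ℝ) (u : ℝ) : ℝ :=
  if u ≤ g T then T + 1 else sInf (SS T g u)

lemma SS_bdd (u : ℝ) : BddBelow (SS T g u) := ⟨0, fun _ hr => hr.1.1⟩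

lemma SS_nonempty (hT : 0 < T) {u : ℝ} (h : g T < u) : (SS T g u).Nonempty :=
  ⟨T, ⟨⟨hT.le, le_rfl⟩, h⟩⟩

lemma sInf_SS_mem_Icc {u : ℝ} (h : (SS T g u).Nonempty) : sInf (SS T g u) ∈ Set.Icc 0 T := by
  obtain ⟨r, hr⟩ := h
  exact ⟨le_csInf ⟨r, hr⟩ fun x hx => hx.1.1, (csInf_le (SS_bdd u) hr).trans hr.1.2⟩

lemma g_sInf_le (hcont : ContinuousOn g (Set.Icc 0 T)) {u : ℝ}
    (h : (SS T g u).Nonempty) : g (sInf (SS T g u)) ≤ u := by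
  obtain ⟨v, _, hv_tendsto, hv_mem⟩ := exists_seq_tendsto_sInf h (SS_bdd u)
  have hx : sInf (SS T g u) ∈ Set.Icc 0 T := sInf_SS_mem_Icc h
  have hcw : ContinuousWithinAt g (Set.Icc 0 T) (sInf (SS T g u)) := hcont _ hx
  have ht : Tendsto (fun n => g (v n)) atTop (𝓝 (g (sInf (SS T g u)))) :=
    hcw.tendsto.comp (tendsto_nhdsWithin_of_tendsto_nhds_of_eventually_within v hv_tendsto
      (Eventually.of_forall fun n => (hv_mem n).1))
  exact le_of_tendsto ht (Eventually.of_forall fun n => (hv_mem n).2.le)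

lemma le_g_of_forall_lt (hcont : ContinuousOn g (Set.Icc 0 T)) {u s : ℝ}
    (hs0 : 0 < s) (hsT : s ≤ T) (h : ∀ r, 0 ≤ r → r < s → u ≤ g r) : u ≤ g s := by
  obtain ⟨v, _, hvlt, hv_tendsto⟩ := exists_seq_strictMono_tendsto s
  have hev : ∀ᶠ n in atTop, 0 < v n := hv_tendsto.eventually (eventually_gt_nhds hs0)
  have hcw : ContinuousWithinAt g (Set.Icc 0 T) s := hcont s ⟨hs0.le, hsT⟩
  have ht : Tendsto (fun n => g (v n)) atTop (𝓝 (g s)) :=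
    hcw.tendsto.comp (tendsto_nhdsWithin_of_tendsto_nhds_of_eventually_within v hv_tendsto
      (hev.mono fun n hn => ⟨hn.le, (hvlt n).le.trans hsT⟩))
  exact ge_of_tendsto ht (hev.mono fun n hn => h (v n) hn.le (hvlt n))

lemma tau_nonneg (hT : 0 < T) (u : ℝ) : 0 ≤ tau T g u := by
  unfold tau; split
  · linarith
  · next h =>
    exact le_csInf (SS_nonempty hT (lt_of_not_ge h)) fun r hr => hr.1.1

lemma tau_le_of_not (hT : 0 < T) {u : ℝ} (h : ¬ u ≤ g T) : tau T g u ≤ T := by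
  unfold tau; rw [if_neg h]
  exact csInf_le (SS_bdd u) ⟨⟨hT.le, le_rfl⟩, lt_of_not_ge h⟩

lemma tau_le_T_add_one (hT : 0 < T) (u : ℝ) : tau T g u ≤ T + 1 := by
  by_cases h : u ≤ g T
  · unfold tau; rw [if_pos h]
  · exact (tau_le_of_not hT h).trans (by linarith)

lemma tau_ge_iff (hT : 0 < T) (hanti : AntitoneOn g (Set.Icc 0 T))
    (hcont : ContinuousOn g (Set.Icc 0 T)) {u s : ℝ} (hs0 : 0 < s) (hsT : s ≤ T) :
    s ≤ tau T g u ↔ u ≤ g s := by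
  unfold tau; split
  · next h =>
    have : g T ≤ g s := hanti ⟨hs0.le, hsT⟩ ⟨hT.le, le_rfl⟩ hsT
    constructor
    · intro _; linarith
    · intro _; linarith
  · next h =>
    have hgt : g T < u := lt_of_not_ge h
    have hne := SS_nonempty hT hgt
    constructor
    · intro hle
      apply le_g_of_forall_lt hcont hs0 hsT
      intro r hr0 hrs
      by_contra hur
      push_neg at hur
      have hmem : r ∈ SS T g u := ⟨⟨hr0, hrs.le.trans hsT⟩, hur⟩
      have := csInf_le (SS_bdd u) hmem
      linarith
    · intro hug
      refine le_csInf hne fun r hr => ?_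
      by_contra hrs
      push_neg at hrs
      have : g s ≤ g r := hanti hr.1 ⟨hs0.le, hsT⟩ hrs.le
      exact absurd hr.2 (by linarith)

lemma one_le_of_tau_nonpos (hT : 0 < T) (hcont : ContinuousOn g (Set.Icc 0 T))
    (h0 : g 0 = 1) {u : ℝ} (h : tau T g u ≤ 0) : 1 ≤ u := by
  unfold tau at h; split at h
  · linarith
  · next hbr =>
    have hne := SS_nonempty hT (lt_of_not_ge hbr)
    have h2 : sInf (SS T g u) = 0 := le_antisymm h (le_csInf hne fun r hr => hr.1.1)
    have := g_sInf_le hcont hne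
    rw [h2, h0] at this
    exact this

/-- Positive version of `tau`. -/
noncomputable def ftau (T : ℝ) (g : ℝ → ℝ) (u : ℝ) : ℝ :=
  if 0 < tau T g u then tau T g u else 1

lemma ftau_pos (T : ℝ) (g : ℝ → ℝ) (u : ℝ) : 0 < ftau T g u := by
  unfold ftau; split
  · assumption
  · exact one_pos

end Tau


section Slice

variable {T : ℝ} {g : ℝ → ℝ}

lemma mem_slice_of (hT : 0 < T) (hmem : ∀ r ∈ Set.Icc (0:ℝ) T, g r ∈ Set.Ioc (0:ℝ) 1)
    (hanti : AntitoneOn g (Set.Icc 0 T)) (hcont : ContinuousOn g (Set.Icc 0 T))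
    {s t u : ℝ} (hs0 : 0 ≤ s) (hst : s < t) (htT : t ≤ T)
    (hu : u ∈ Set.Ioc (g t) (g s)) (hne : u ≠ g s) :
    u ∈ Set.Ioc (0:ℝ) 1 ∧ s < ftau T g u ∧ ftau T g u ≤ t := by
  have ht_mem : t ∈ Set.Icc 0 T := ⟨hs0.trans hst.le, htT⟩
  have hs_mem : s ∈ Set.Icc 0 T := ⟨hs0, hst.le.trans htT⟩
  have hgt_pos : 0 < g t := (hmem t ht_mem).1
  have hgs_le : g s ≤ 1 := (hmem s hs_mem).2
  have hTt : g T ≤ g t := hanti ht_mem ⟨hT.le, le_rfl⟩ htT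
  have hbr : ¬ (u ≤ g T) := by have := hu.1; push_neg; linarith
  have htau_eq : tau T g u = sInf (SS T g u) := if_neg hbr
  have hne' := SS_nonempty hT (show g T < u by linarith [hu.1])
  have h_le_t : tau T g u ≤ t := htau_eq ▸ csInf_le (SS_bdd u) ⟨ht_mem, hu.1⟩
  have h_ge_s : s ≤ tau T g u := by
    rcases eq_or_lt_of_le hs0 with h | h
    · exact h ▸ tau_nonneg hT u
    · exact (tau_ge_iff hT hanti hcont h (hst.le.trans htT)).mpr hu.2
  have h_ne_s : tau T g u ≠ s := by
    intro hEq
    apply hne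
    have h2 := g_sInf_le hcont hne'
    rw [← htau_eq, hEq] at h2
    exact le_antisymm hu.2 h2
  have hst' : s < tau T g u := lt_of_le_of_ne h_ge_s (Ne.symm h_ne_s)
  have h_pos : 0 < tau T g u := lt_of_le_of_lt hs0 hst'
  have hf : ftau T g u = tau T g u := if_pos h_pos
  exact ⟨⟨lt_trans hgt_pos hu.1, hu.2.trans hgs_le⟩, by rw [hf]; exact hst', by rw [hf]; exact h_le_t⟩

lemma slice_subset (hT : 0 < T) (h0 : g 0 = 1)
    (hanti : AntitoneOn g (Set.Icc 0 T)) (hcont : ContinuousOn g (Set.Icc 0 T))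
    {s t u : ℝ} (hs0 : 0 ≤ s) (hst : s < t) (htT : t ≤ T)
    (hu : u ∈ Set.Ioc (0:ℝ) 1) (h1 : s < ftau T g u) (h2 : ftau T g u ≤ t)
    (hne1 : u ≠ g t) (hne2 : u ≠ 1) : u ∈ Set.Ioc (g t) (g s) := by
  have h_pos : 0 < tau T g u := by
    by_contra h
    push_neg at h
    exact hne2 (le_antisymm hu.2 (one_le_of_tau_nonpos hT hcont h0 h))
  have hf : ftau T g u = tau T g u := if_pos h_pos
  rw [hf] at h1 h2
  have hbr : ¬ (u ≤ g T) := by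
    intro h
    have htt : tau T g u = T + 1 := if_pos h
    rw [htt] at h2
    linarith
  have htau_eq : tau T g u = sInf (SS T g u) := if_neg hbr
  have hne' := SS_nonempty hT (lt_of_not_ge hbr)
  constructor
  · by_contra hgt
    push_neg at hgt
    have hge : t ≤ tau T g u :=
      (tau_ge_iff hT hanti hcont (hs0.trans_lt hst) htT).mpr hgt
    have hEq : tau T g u = t := le_antisymm h2 hge
    have h3 := g_sInf_le hcont hne'
    rw [← htau_eq, hEq] at h3
    exact hne1 (le_antisymm hgt h3)
  · rcases eq_or_lt_of_le hs0 with h | h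
    · rw [← h, h0]; exact hu.2
    · exact (tau_ge_iff hT hanti hcont h (hst.le.trans htT)).mp h1.le

lemma mem_T_slice_of (hT : 0 < T) (hmem : ∀ r ∈ Set.Icc (0:ℝ) T, g r ∈ Set.Ioc (0:ℝ) 1)
    {u : ℝ} (hu : u ∈ Set.Ioc (0:ℝ) (g T)) : u ∈ Set.Ioc (0:ℝ) 1 ∧ T < ftau T g u := by
  have htt : tau T g u = T + 1 := if_pos hu.2
  have hf : ftau T g u = T + 1 := by rw [ftau, htt]; rw [if_pos (by linarith)]
  exact ⟨⟨hu.1, hu.2.trans (hmem T ⟨hT.le, le_rfl⟩).2⟩, by rw [hf]; linarith⟩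

lemma T_slice_subset (hT : 0 < T) (h0 : g 0 = 1) (hcont : ContinuousOn g (Set.Icc 0 T))
    {u : ℝ} (hu : u ∈ Set.Ioc (0:ℝ) 1) (h : T < ftau T g u) (hne : u ≠ 1) :
    u ∈ Set.Ioc (0:ℝ) (g T) := by
  have h_pos : 0 < tau T g u := by
    by_contra hc
    push_neg at hc
    exact hne (le_antisymm hu.2 (one_le_of_tau_nonpos hT hcont h0 hc))
  have hf : ftau T g u = tau T g u := if_pos h_pos
  rw [hf] at h
  refine ⟨hu.1, ?_⟩
  by_contra hc
  push_neg at hc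
  have := tau_le_of_not hT (not_le.mpr hc)
  linarith

lemma vol_slice1 (hT : 0 < T) (hmem : ∀ r ∈ Set.Icc (0:ℝ) T, g r ∈ Set.Ioc (0:ℝ) 1)
    (h0 : g 0 = 1) (hanti : AntitoneOn g (Set.Icc 0 T)) (hcont : ContinuousOn g (Set.Icc 0 T))
    {s t : ℝ} (hs0 : 0 ≤ s) (hst : s < t) (htT : t ≤ T) :
    (volume.restrict (Set.Ioc (0:ℝ) 1)) {u | s < ftau T g u ∧ ftau T g u ≤ t} =
      ENNReal.ofReal (g s - g t) := by
  rw [Measure.restrict_apply' measurableSet_Ioc]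
  have hae : ({u | s < ftau T g u ∧ ftau T g u ≤ t} ∩ Set.Ioc 0 1 : Set ℝ)
      =ᵐ[volume] Set.Ioc (g t) (g s) := by
    rw [ae_eq_set]
    constructor
    · refine measure_mono_null (fun u hu => ?_) ((Set.toFinite {g t, (1:ℝ)}).measure_zero volume)
      obtain ⟨⟨h1, h2⟩, hnot⟩ := hu
      by_contra hc
      simp only [Set.mem_insert_iff, Set.mem_singleton_iff] at hc
      push_neg at hc
      exact hnot (slice_subset hT h0 hanti hcont hs0 hst htT h2 h1.1 h1.2 hc.1 hc.2)
    · refine measure_mono_null (fun u hu => ?_) ((Set.toFinite {g s}).measure_zero volume)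
      obtain ⟨h1, hnot⟩ := hu
      by_contra hc
      simp only [Set.mem_singleton_iff] at hc
      obtain ⟨ha, hb, hcc⟩ := mem_slice_of hT hmem hanti hcont hs0 hst htT h1 hc
      exact hnot ⟨⟨hb, hcc⟩, ha⟩
  rw [measure_congr hae, Real.volume_Ioc]

lemma vol_slice2 (hT : 0 < T) (hmem : ∀ r ∈ Set.Icc (0:ℝ) T, g r ∈ Set.Ioc (0:ℝ) 1)
    (h0 : g 0 = 1) (hcont : ContinuousOn g (Set.Icc 0 T)) :
    (volume.restrict (Set.Ioc (0:ℝ) 1)) {u | T < ftau T g u} = ENNReal.ofReal (g T) := by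
  rw [Measure.restrict_apply' measurableSet_Ioc]
  have hae : ({u | T < ftau T g u} ∩ Set.Ioc 0 1 : Set ℝ)
      =ᵐ[volume] Set.Ioc (0:ℝ) (g T) := by
    rw [ae_eq_set]
    constructor
    · refine measure_mono_null (fun u hu => ?_) ((Set.toFinite {(1:ℝ)}).measure_zero volume)
      obtain ⟨h1, hnot⟩ := hu
      by_contra hc
      simp only [Set.mem_singleton_iff] at hc
      exact hnot (T_slice_subset hT h0 hcont h1.2 h1.1 hc)
    · refine measure_mono_null (fun u hu => ?_) ((Set.toFinite (∅ : Set ℝ)).measure_zero volume)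
      obtain ⟨h1, hnot⟩ := hu
      obtain ⟨ha, hb⟩ := mem_T_slice_of hT hmem h1
      exact absurd ⟨hb, ha⟩ hnot
  rw [measure_congr hae, Real.volume_Ioc, sub_zero]

end Slice

section Glob

open MeasureTheory Filter Topology Set

variable {Ω : Type*} [mΩ : MeasurableSpace Ω]

lemma cyl_inter {T : ℝ} {C₁ C₂ : Set (PathSp T)} (h₁ : IsCylSet T C₁) (h₂ : IsCylSet T C₂) :
    IsCylSet T (C₁ ∩ C₂) := by
  obtain ⟨n₁, z₁, Z₁, hZ₁, rfl⟩ := h₁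
  obtain ⟨n₂, z₂, Z₂, hZ₂, rfl⟩ := h₂
  refine ⟨n₁ + n₂, Fin.append z₁ z₂,
    ((fun v : Fin (n₁ + n₂) → OnePoint ℝ => fun i => v (Fin.castAdd n₂ i)) ⁻¹' Z₁) ∩
      ((fun v : Fin (n₁ + n₂) → OnePoint ℝ => fun i => v (Fin.natAdd n₁ i)) ⁻¹' Z₂), ?_, ?_⟩
  · exact ((measurable_pi_lambda _ fun i => measurable_pi_apply _) hZ₁).inter
      ((measurable_pi_lambda _ fun i => measurable_pi_apply _) hZ₂)
  · ext x
    simp only [Cyl, Set.mem_inter_iff, Set.mem_setOf_eq, Set.mem_preimage, Fin.append_left,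
      Fin.append_right]

lemma basic_pisystem (T : ℝ) : IsPiSystem {A : Set (OmegaTilde T) | IsBasicSet T A} := by
  rintro A₁ ⟨C₁, hC₁, h₁⟩ A₂ ⟨C₂, hC₂, h₂⟩ hne
  rcases h₁ with ⟨s₁, t₁, hs₁, hst₁, ht₁, rfl⟩ | rfl <;>
    rcases h₂ with ⟨s₂, t₂, hs₂, hst₂, ht₂, rfl⟩ | rfl
  · obtain ⟨p, hp₁, hp₂⟩ := hne
    refine ⟨C₁ ∩ C₂, cyl_inter hC₁ hC₂, Or.inl ⟨max s₁ s₂, min t₁ t₂,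
      le_max_of_le_left hs₁, ?_, (min_le_left _ _).trans ht₁, ?_⟩⟩
    · exact lt_of_lt_of_le (max_lt hp₁.2.1 hp₂.2.1) (le_min hp₁.2.2 hp₂.2.2)
    · ext q
      simp only [Set.mem_inter_iff, Set.mem_setOf_eq, max_lt_iff, le_min_iff]
      tauto
  · obtain ⟨p, hp₁, hp₂⟩ := hne
    exact absurd (hp₁.2.2.trans ht₁) (not_le.mpr hp₂.2)
  · obtain ⟨p, hp₁, hp₂⟩ := hne
    exact absurd (hp₂.2.2.trans ht₂) (not_le.mpr hp₁.2)
  · refine ⟨C₁ ∩ C₂, cyl_inter hC₁ hC₂, Or.inr ?_⟩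
    ext q
    simp only [Set.mem_inter_iff, Set.mem_setOf_eq]
    tauto

lemma rho_measurable {T : ℝ} (hT : 0 < T) (G : ℝ → Ω → ℝ)
    (hG_anti : ∀ ω, AntitoneOn (fun t => G t ω) (Set.Icc (0 : ℝ) T))
    (hG_cont : ∀ ω, ContinuousOn (fun t => G t ω) (Set.Icc (0 : ℝ) T))
    (hG_meas : ∀ t ∈ Set.Icc (0 : ℝ) T, Measurable (G t)) :
    Measurable (fun q : Ω × ℝ => tau T (fun r => G r q.1) q.2) := by
  apply measurable_of_Ici
  intro c
  rcases le_or_gt c 0 with hc | hc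
  · have : (fun q : Ω × ℝ => tau T (fun r => G r q.1) q.2) ⁻¹' (Set.Ici c) = Set.univ :=
      Set.eq_univ_of_forall fun q => hc.trans (tau_nonneg hT _)
    rw [this]; exact MeasurableSet.univ
  rcases le_or_gt c T with hcT | hcT
  · have : (fun q : Ω × ℝ => tau T (fun r => G r q.1) q.2) ⁻¹' (Set.Ici c) =
        {q : Ω × ℝ | q.2 ≤ G c q.1} := by
      ext q
      exact tau_ge_iff hT (hG_anti q.1) (hG_cont q.1) hc hcT
    rw [this]
    exact measurableSet_le measurable_snd ((hG_meas c ⟨hc.le, hcT⟩).comp measurable_fst)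
  rcases le_or_gt c (T + 1) with hcT1 | hcT1
  · have : (fun q : Ω × ℝ => tau T (fun r => G r q.1) q.2) ⁻¹' (Set.Ici c) =
        {q : Ω × ℝ | q.2 ≤ G T q.1} := by
      ext q
      constructor
      · intro hq
        by_contra h
        have h' : ¬ (q.2 ≤ G T q.1) := h
        have := tau_le_of_not (g := fun r => G r q.1) hT h'
        have : c ≤ T := le_trans hq this
        linarith
      · intro h
        have : tau T (fun r => G r q.1) q.2 = T + 1 := if_pos h
        simp only [Set.mem_preimage, Set.mem_Ici, this]
        exact hcT1
    rw [this]
    exact measurableSet_le measurable_snd ((hG_meas T ⟨hT.le, le_rfl⟩).comp measurable_fst)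
  · have : (fun q : Ω × ℝ => tau T (fun r => G r q.1) q.2) ⁻¹' (Set.Ici c) = ∅ := by
      ext q
      simp only [Set.mem_preimage, Set.mem_Ici, Set.mem_empty_iff_false, iff_false, not_le]
      exact lt_of_le_of_lt (tau_le_T_add_one hT _) hcT1
    rw [this]; exact MeasurableSet.empty

lemma frho_measurable {T : ℝ} (hT : 0 < T) (G : ℝ → Ω → ℝ)
    (hG_anti : ∀ ω, AntitoneOn (fun t => G t ω) (Set.Icc 0 T))
    (hG_cont : ∀ ω, ContinuousOn (fun t => G t ω) (Set.Icc 0 T))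
    (hG_meas : ∀ t ∈ Set.Icc (0 : ℝ) T, Measurable (G t)) :
    Measurable (fun q : Ω × ℝ => ftau T (fun r => G r q.1) q.2) := by
  have hrho := rho_measurable hT G hG_anti hG_cont hG_meas
  have : (fun q : Ω × ℝ => ftau T (fun r => G r q.1) q.2) =
      fun q : Ω × ℝ => if 0 < tau T (fun r => G r q.1) q.2
        then tau T (fun r => G r q.1) q.2 else 1 := rfl
  rw [this]
  exact Measurable.ite (measurableSet_lt measurable_const hrho) hrho measurable_const

end Glob


/-- The defining formulas for the measure `Q̃` on `σ(𝒜̃)`: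
`Q̃(A_{z,Z} × (s,t]) = E_{Q_BS}[1_{{W ∈ A_{z,Z}}}·(G(s) − G(t))]` and
`Q̃(A_{z,Z} × (T,∞)) = E_{Q_BS}[1_{{W ∈ A_{z,Z}}}·G(T)]`. -/
def SatisfiesFormulas {Ω : Type*} [MeasurableSpace Ω] (Q_BS : Measure Ω) (T : ℝ)
    (W : Ω → PathSp T) (G : ℝ → Ω → ℝ)
    (Qt : @Measure (OmegaTilde T) (MeasurableSpace.generateFrom (AlgTilde T))) : Prop :=
  (∀ (n : ℕ) (z : Fin n → Set.Icc (0 : ℝ) T) (Z : Set (Fin n → OnePoint ℝ)),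
    MeasurableSet Z → ∀ s t : ℝ, 0 ≤ s → s < t → t ≤ T →
      Qt {p : OmegaTilde T | p.1 ∈ Cyl T n z Z ∧ s < (p.2 : ℝ) ∧ (p.2 : ℝ) ≤ t} =
        ENNReal.ofReal (∫ ω in {ω | W ω ∈ Cyl T n z Z}, (G s ω - G t ω) ∂Q_BS)) ∧
  (∀ (n : ℕ) (z : Fin n → Set.Icc (0 : ℝ) T) (Z : Set (Fin n → OnePoint ℝ)),
    MeasurableSet Z →
      Qt {p : OmegaTilde T | p.1 ∈ Cyl T n z Z ∧ T < (p.2 : ℝ)} =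
        ENNReal.ofReal (∫ ω in {ω | W ω ∈ Cyl T n z Z}, G T ω ∂Q_BS))

open MeasureTheory Filter Topology Set in
/-- There exists a unique measure `Q̃` on the σ-algebra `σ(𝒜̃)` generated by
the algebra `𝒜̃` such that for every cylindrical set `A_{z,Z}` and all `0 ≤ s < t ≤ T`:
`Q̃(A_{z,Z} × (s,t]) = E_{Q_BS}[1_{{W ∈ A_{z,Z}}}·(G(s) − G(t))]` and
`Q̃(A_{z,Z} × (T,∞)) = E_{Q_BS}[1_{{W ∈ A_{z,Z}}}·G(T)]`; moreover `Q̃` is a probability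
measure. -/
theorem stmt7 {Ω : Type*} [mΩ : MeasurableSpace Ω] (Q_BS : Measure Ω)
    [IsProbabilityMeasure Q_BS] (T : ℝ) (hT : 0 < T)
    (W : Ω → PathSp T) (hW : ∀ z : Set.Icc (0 : ℝ) T, Measurable fun ω => W ω z)
    (G : ℝ → Ω → ℝ)
    (hG_mem : ∀ t ∈ Set.Icc (0 : ℝ) T, ∀ ω, G t ω ∈ Set.Ioc (0 : ℝ) 1)
    (hG_zero : ∀ ω, G 0 ω = 1)
    (hG_anti : ∀ ω, AntitoneOn (fun t => G t ω) (Set.Icc (0 : ℝ) T))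
    (hG_cont : ∀ ω, ContinuousOn (fun t => G t ω) (Set.Icc (0 : ℝ) T))
    (hG_meas : ∀ t ∈ Set.Icc (0 : ℝ) T, Measurable (G t)) :
    ∃ Qt : @Measure (OmegaTilde T) (MeasurableSpace.generateFrom (AlgTilde T)),
      SatisfiesFormulas Q_BS T W G Qt ∧
      @IsProbabilityMeasure (OmegaTilde T)
        (MeasurableSpace.generateFrom (AlgTilde T)) Qt ∧
      ∀ Qt' : @Measure (OmegaTilde T) (MeasurableSpace.generateFrom (AlgTilde T)),
        SatisfiesFormulas Q_BS T W G Qt' → Qt' = Qt := by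
  letI mt : MeasurableSpace (OmegaTilde T) := MeasurableSpace.generateFrom (AlgTilde T)
  set F : Ω × ℝ → ℝ := fun q => ftau T (fun r => G r q.1) q.2 with hF_def
  have hF : Measurable F := frho_measurable hT G hG_anti hG_cont hG_meas
  set Psi : Ω × ℝ → OmegaTilde T := fun q => (W q.1, ⟨F q, ftau_pos _ _ _⟩) with hPsi_def
  set μ : Measure (Ω × ℝ) := Q_BS.prod (volume.restrict (Set.Ioc (0:ℝ) 1)) with hμ_def
  -- measurability of cylinder events
  have hMcyl : ∀ (n : ℕ) (z : Fin n → Set.Icc (0:ℝ) T) (Z : Set (Fin n → OnePoint ℝ)),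
      MeasurableSet Z → MeasurableSet {ω | W ω ∈ Cyl T n z Z} := by
    intro n z Z hZ
    have : {ω | W ω ∈ Cyl T n z Z} = (fun ω => fun i => W ω (z i)) ⁻¹' Z := rfl
    rw [this]
    exact (measurable_pi_lambda _ fun i => hW (z i)) hZ
  have hQpre1 : ∀ (n : ℕ) (z : Fin n → Set.Icc (0:ℝ) T) (Z : Set (Fin n → OnePoint ℝ)),
      MeasurableSet Z → ∀ s t : ℝ,
      MeasurableSet {q : Ω × ℝ | W q.1 ∈ Cyl T n z Z ∧ s < F q ∧ F q ≤ t} := by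
    intro n z Z hZ s t
    have he : {q : Ω × ℝ | W q.1 ∈ Cyl T n z Z ∧ s < F q ∧ F q ≤ t} =
        ((fun q : Ω × ℝ => fun i => W q.1 (z i)) ⁻¹' Z) ∩ (F ⁻¹' Set.Ioc s t) := by
      ext q; simp only [Set.mem_setOf_eq, Set.mem_inter_iff, Set.mem_preimage, Set.mem_Ioc]; rfl
    rw [he]
    exact ((measurable_pi_lambda _ fun i => (hW (z i)).comp measurable_fst) hZ).inter
      (hF measurableSet_Ioc)
  have hQpre2 : ∀ (n : ℕ) (z : Fin n → Set.Icc (0:ℝ) T) (Z : Set (Fin n → OnePoint ℝ)),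
      MeasurableSet Z →
      MeasurableSet {q : Ω × ℝ | W q.1 ∈ Cyl T n z Z ∧ T < F q} := by
    intro n z Z hZ
    have he : {q : Ω × ℝ | W q.1 ∈ Cyl T n z Z ∧ T < F q} =
        ((fun q : Ω × ℝ => fun i => W q.1 (z i)) ⁻¹' Z) ∩ (F ⁻¹' Set.Ioi T) := by
      ext q; simp only [Set.mem_setOf_eq, Set.mem_inter_iff, Set.mem_preimage, Set.mem_Ioi]; rfl
    rw [he]
    exact ((measurable_pi_lambda _ fun i => (hW (z i)).comp measurable_fst) hZ).inter
      (hF measurableSet_Ioi)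
  have hbasic_alg : ∀ A : Set (OmegaTilde T), IsBasicSet T A → A ∈ AlgTilde T := by
    intro A hA
    refine ⟨1, fun _ => A, fun _ => hA, ?_, (Set.iUnion_const A).symm⟩
    intro i j hij
    exact absurd (Subsingleton.elim i j) hij
  have hbasic_meas : ∀ A : Set (OmegaTilde T), IsBasicSet T A → MeasurableSet[mt] A :=
    fun A hA => MeasurableSpace.measurableSet_generateFrom (hbasic_alg A hA)
  have hPsi_pre : ∀ A : Set (OmegaTilde T), IsBasicSet T A → MeasurableSet (Psi ⁻¹' A) := by
    rintro A ⟨C, ⟨n, z, Z, hZ, rfl⟩, (⟨s, t, h0s, hst, htT, rfl⟩ | rfl)⟩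
    · exact hQpre1 n z Z hZ s t
    · exact hQpre2 n z Z hZ
  have hPsi : @Measurable (Ω × ℝ) (OmegaTilde T) _ mt Psi := by
    apply measurable_generateFrom
    rintro A ⟨m, B, hB, _, rfl⟩
    rw [Set.preimage_iUnion]
    exact MeasurableSet.iUnion fun i => hPsi_pre _ (hB i)
  have hGint : ∀ r ∈ Set.Icc (0:ℝ) T, Integrable (G r) Q_BS := by
    intro r hr
    refine (integrable_const (1:ℝ)).mono' (hG_meas r hr).aestronglyMeasurable
      (ae_of_all _ fun ω => ?_)
    rw [Real.norm_eq_abs, abs_of_pos (hG_mem r hr ω).1]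
    exact (hG_mem r hr ω).2
  -- the two defining formulas for the mapped measure
  have hsat : SatisfiesFormulas Q_BS T W G (μ.map Psi) := by
    constructor
    · intro n z Z hZ s t h0s hst htT
      have hA : IsBasicSet T
          {p : OmegaTilde T | p.1 ∈ Cyl T n z Z ∧ s < (p.2 : ℝ) ∧ (p.2 : ℝ) ≤ t} :=
        ⟨Cyl T n z Z, ⟨n, z, Z, hZ, rfl⟩, Or.inl ⟨s, t, h0s, hst, htT, rfl⟩⟩
      rw [Measure.map_apply hPsi (hbasic_meas _ hA)]
      have hpre : Psi ⁻¹' {p : OmegaTilde T | p.1 ∈ Cyl T n z Z ∧ s < (p.2 : ℝ) ∧ (p.2 : ℝ) ≤ t}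
          = {q : Ω × ℝ | W q.1 ∈ Cyl T n z Z ∧ s < F q ∧ F q ≤ t} := rfl
      rw [hpre, hμ_def, Measure.prod_apply (hQpre1 n z Z hZ s t)]
      have hM := hMcyl n z Z hZ
      have hsect : ∀ ω, (volume.restrict (Set.Ioc (0:ℝ) 1))
          (Prod.mk ω ⁻¹' {q : Ω × ℝ | W q.1 ∈ Cyl T n z Z ∧ s < F q ∧ F q ≤ t}) =
          Set.indicator {ω | W ω ∈ Cyl T n z Z}
            (fun ω => ENNReal.ofReal (G s ω - G t ω)) ω := by
        intro ω
        by_cases hω : W ω ∈ Cyl T n z Z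
        · have he : Prod.mk ω ⁻¹' {q : Ω × ℝ | W q.1 ∈ Cyl T n z Z ∧ s < F q ∧ F q ≤ t} =
              {u | s < ftau T (fun r => G r ω) u ∧ ftau T (fun r => G r ω) u ≤ t} := by
            ext u
            simp only [Set.mem_preimage, Set.mem_setOf_eq]
            exact and_iff_right hω
          rw [he, vol_slice1 hT (fun r hr => hG_mem r hr ω) (hG_zero ω) (hG_anti ω)
            (hG_cont ω) h0s hst htT,
            Set.indicator_of_mem (show ω ∈ {ω | W ω ∈ Cyl T n z Z} from hω)]
        · have he : Prod.mk ω ⁻¹' {q : Ω × ℝ | W q.1 ∈ Cyl T n z Z ∧ s < F q ∧ F q ≤ t} =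
              (∅ : Set ℝ) := by
            ext u
            simp only [Set.mem_preimage, Set.mem_setOf_eq, Set.mem_empty_iff_false, iff_false]
            exact fun h => hω h.1
          rw [he, measure_empty,
            Set.indicator_of_notMem (show ω ∉ {ω | W ω ∈ Cyl T n z Z} from hω)]
      rw [lintegral_congr hsect, lintegral_indicator hM]
      exact (ofReal_integral_eq_lintegral_ofReal
        (((hGint s ⟨h0s, hst.le.trans htT⟩).sub (hGint t ⟨h0s.trans hst.le, htT⟩)).restrict)
        (ae_of_all _ fun ω => sub_nonneg.mpr
          (hG_anti ω ⟨h0s, hst.le.trans htT⟩ ⟨h0s.trans hst.le, htT⟩ hst.le))).symm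
    · intro n z Z hZ
      have hA : IsBasicSet T {p : OmegaTilde T | p.1 ∈ Cyl T n z Z ∧ T < (p.2 : ℝ)} :=
        ⟨Cyl T n z Z, ⟨n, z, Z, hZ, rfl⟩, Or.inr rfl⟩
      rw [Measure.map_apply hPsi (hbasic_meas _ hA)]
      have hpre : Psi ⁻¹' {p : OmegaTilde T | p.1 ∈ Cyl T n z Z ∧ T < (p.2 : ℝ)}
          = {q : Ω × ℝ | W q.1 ∈ Cyl T n z Z ∧ T < F q} := rfl
      rw [hpre, hμ_def, Measure.prod_apply (hQpre2 n z Z hZ)]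
      have hM := hMcyl n z Z hZ
      have hsect : ∀ ω, (volume.restrict (Set.Ioc (0:ℝ) 1))
          (Prod.mk ω ⁻¹' {q : Ω × ℝ | W q.1 ∈ Cyl T n z Z ∧ T < F q}) =
          Set.indicator {ω | W ω ∈ Cyl T n z Z}
            (fun ω => ENNReal.ofReal (G T ω)) ω := by
        intro ω
        by_cases hω : W ω ∈ Cyl T n z Z
        · have he : Prod.mk ω ⁻¹' {q : Ω × ℝ | W q.1 ∈ Cyl T n z Z ∧ T < F q} =
              {u | T < ftau T (fun r => G r ω) u} := by
            ext u
            simp only [Set.mem_preimage, Set.mem_setOf_eq]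
            exact and_iff_right hω
          rw [he, vol_slice2 hT (fun r hr => hG_mem r hr ω) (hG_zero ω) (hG_cont ω),
            Set.indicator_of_mem (show ω ∈ {ω | W ω ∈ Cyl T n z Z} from hω)]
        · have he : Prod.mk ω ⁻¹' {q : Ω × ℝ | W q.1 ∈ Cyl T n z Z ∧ T < F q} =
              (∅ : Set ℝ) := by
            ext u
            simp only [Set.mem_preimage, Set.mem_setOf_eq, Set.mem_empty_iff_false, iff_false]
            exact fun h => hω h.1
          rw [he, measure_empty,
            Set.indicator_of_notMem (show ω ∉ {ω | W ω ∈ Cyl T n z Z} from hω)]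
      rw [lintegral_congr hsect, lintegral_indicator hM]
      exact (ofReal_integral_eq_lintegral_ofReal ((hGint T ⟨hT.le, le_rfl⟩).restrict)
        (ae_of_all _ fun ω => (hG_mem T ⟨hT.le, le_rfl⟩ ω).1.le)).symm
  -- any measure satisfying the formulas has total mass 1
  have huniv : ∀ Qt' : @Measure (OmegaTilde T) (MeasurableSpace.generateFrom (AlgTilde T)),
      SatisfiesFormulas Q_BS T W G Qt' → Qt' Set.univ = 1 := by
    intro Qt' hsat'
    have h1 := hsat'.1 0 Fin.elim0 Set.univ MeasurableSet.univ 0 T le_rfl hT le_rfl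
    have h2 := hsat'.2 0 Fin.elim0 Set.univ MeasurableSet.univ
    have hMuniv : {ω | W ω ∈ Cyl T 0 Fin.elim0 Set.univ} = Set.univ := by
      ext ω; simp [Cyl]
    rw [hMuniv, Measure.restrict_univ] at h1 h2
    have hCuniv : ∀ x : PathSp T, x ∈ Cyl T 0 Fin.elim0 Set.univ := fun x => Set.mem_univ _
    have hsplit : (Set.univ : Set (OmegaTilde T)) =
        {p : OmegaTilde T | p.1 ∈ Cyl T 0 Fin.elim0 Set.univ ∧ 0 < (p.2:ℝ) ∧ (p.2:ℝ) ≤ T} ∪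
        {p : OmegaTilde T | p.1 ∈ Cyl T 0 Fin.elim0 Set.univ ∧ T < (p.2:ℝ)} := by
      ext p
      simp only [Set.mem_univ, true_iff, Set.mem_union, Set.mem_setOf_eq]
      rcases le_or_gt (p.2:ℝ) T with h | h
      · exact Or.inl ⟨hCuniv _, p.2.2, h⟩
      · exact Or.inr ⟨hCuniv _, h⟩
    have hdisj : Disjoint
        {p : OmegaTilde T | p.1 ∈ Cyl T 0 Fin.elim0 Set.univ ∧ 0 < (p.2:ℝ) ∧ (p.2:ℝ) ≤ T}
        {p : OmegaTilde T | p.1 ∈ Cyl T 0 Fin.elim0 Set.univ ∧ T < (p.2:ℝ)} :=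
      Set.disjoint_left.mpr fun p hp₁ hp₂ => absurd hp₁.2.2 (not_le.mpr hp₂.2)
    have hA₂ : MeasurableSet[mt]
        {p : OmegaTilde T | p.1 ∈ Cyl T 0 Fin.elim0 Set.univ ∧ T < (p.2:ℝ)} :=
      hbasic_meas _ ⟨_, ⟨0, Fin.elim0, Set.univ, MeasurableSet.univ, rfl⟩, Or.inr rfl⟩
    rw [hsplit, measure_union hdisj hA₂, h1, h2]
    have hint0 := hGint 0 ⟨le_rfl, hT.le⟩
    have hintT := hGint T ⟨hT.le, le_rfl⟩
    have e1 : ∫ ω, (G 0 ω - G T ω) ∂Q_BS = 1 - ∫ ω, G T ω ∂Q_BS := by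
      rw [integral_sub hint0 hintT]
      have : ∫ ω, G 0 ω ∂Q_BS = ∫ _ω, (1:ℝ) ∂Q_BS :=
        integral_congr_ae (ae_of_all _ fun ω => hG_zero ω)
      rw [this, integral_const, probReal_univ]
      simp
    have hTnn : 0 ≤ ∫ ω, G T ω ∂Q_BS :=
      integral_nonneg fun ω => (hG_mem T ⟨hT.le, le_rfl⟩ ω).1.le
    have hTle : ∫ ω, G T ω ∂Q_BS ≤ 1 := by
      have := integral_mono hintT (integrable_const (1:ℝ))
        (fun ω => (hG_mem T ⟨hT.le, le_rfl⟩ ω).2)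
      rwa [integral_const, probReal_univ, smul_eq_mul, mul_one] at this
    rw [e1, ← ENNReal.ofReal_add (by linarith) hTnn, sub_add_cancel, ENNReal.ofReal_one]
  refine ⟨μ.map Psi, hsat, ⟨huniv _ hsat⟩, ?_⟩
  intro Qt' hsat'
  haveI hfin' : IsFiniteMeasure Qt' :=
    ⟨by rw [huniv Qt' hsat']; exact ENNReal.one_lt_top⟩
  have hgen : mt = MeasurableSpace.generateFrom {A : Set (OmegaTilde T) | IsBasicSet T A} := by
    apply le_antisymm
    · apply MeasurableSpace.generateFrom_le
      rintro A ⟨m, B, hB, _, rfl⟩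
      exact MeasurableSet.iUnion fun i => MeasurableSpace.measurableSet_generateFrom (hB i)
    · exact MeasurableSpace.generateFrom_le fun A hA => hbasic_meas A hA
  refine ext_of_generate_finite _ hgen (basic_pisystem T) ?_ ?_
  · rintro A ⟨C, ⟨n, z, Z, hZ, rfl⟩, (⟨s, t, h0s, hst, htT, rfl⟩ | rfl)⟩
    · rw [hsat'.1 n z Z hZ s t h0s hst htT, hsat.1 n z Z hZ s t h0s hst htT]
    · rw [hsat'.2 n z Z hZ, hsat.2 n z Z hZ]
  · rw [huniv _ hsat', huniv _ hsat]
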